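/- arXiv:2107.06952 — 2 statements merged into one kernel-verified Lean document; each statement's English description precedes it below -/
import Mathlib

section
/- For every integer m ≥ 2, the numbers c_m^* satisfy c_{2m+1}^* = 2·c_{2m}^* − c_{m+1}^* (equivalently, 2·c_{2m}^* = c_{2m+1}^* + c_{m+1}^*). -/
/-- The Conway number (correlation) `C(A,B)` of two head/tail strings of length `n`,
encoded as functions `Fin n → Bool` (with `H = true`, `T = false`, and 0-indexed
positions): `C(A,B) = ∑_{i=1}^n δ_i 2^{n-i}` where `δ_i = 1` iff `a_{i+j} = b_{1+j}`
for all `j = 0,…,n-i`. -/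
def conway {n : ℕ} (A B : Fin n → Bool) : ℕ :=
  ∑ i : Fin n,
    if (∀ j : Fin n, (i : ℕ) + (j : ℕ) < n → A (i + j) = B j) then 2 ^ (n - 1 - (i : ℕ)) else 0

/-- `cstar m` is the number of head/tail strings of length `m` beginning with `HT`,
ending with `TH`, whose autocorrelation is `2^{m-1} + 1`. -/
def cstar (m : ℕ) : ℕ :=
  Fintype.card {A : Fin m → Bool //
    (∀ i : Fin m, (i : ℕ) = 0 → A i = true) ∧
    (∀ i : Fin m, (i : ℕ) = 1 → A i = false) ∧
    (∀ i : Fin m, (i : ℕ) = m - 2 → A i = false) ∧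
    (∀ i : Fin m, (i : ℕ) = m - 1 → A i = true) ∧
    conway A A = 2 ^ (m - 1) + 1}

/-- `c n = 2 * cstar (n-1)`: by Csirik's characterization, the number of optimal
strategies for Player I in the Penney-Ante game with strings of length `n`. -/
def c (n : ℕ) : ℕ := 2 * cstar (n - 1)


namespace Csirik

def ShiftN (f : ℕ → Bool) (n p : ℕ) : Prop := ∀ j, p + j < n → f (p + j) = f j

def GoodN (n : ℕ) (f : ℕ → Bool) : Prop :=
  f 0 = true ∧ f 1 = false ∧ f (n - 2) = false ∧ f (n - 1) = true ∧
    ∀ p, 0 < p → p < n - 1 → ¬ ShiftN f n p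

def TailT (n : ℕ) (f : ℕ → Bool) : Prop := ∀ k, n ≤ k → f k = true

def F (n : ℕ) := {f : ℕ → Bool // GoodN n f ∧ TailT n f}

lemma tower {f : ℕ → Bool} {s lo hi : ℕ}
    (h : ∀ x, lo ≤ x → x + s ≤ hi → f (x + s) = f x) :
    ∀ t x, lo ≤ x → x + t * s ≤ hi → f (x + t * s) = f x := by
  intro t
  induction t with
  | zero => intro x _ _; simp
  | succ t ih =>
    intro x hx hb
    have h1 : x + (t + 1) * s = (x + t * s) + s := by ring
    rw [h1, h (x + t * s) (by omega) (by omega), ih x hx (by omega)]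

def insN (m : ℕ) (f : ℕ → Bool) (x : Bool) : ℕ → Bool :=
  fun k => if k < m then f k else if k = m then x else f (k - 1)

def delN (m : ℕ) (B : ℕ → Bool) : ℕ → Bool :=
  fun k => if k < m then B k else B (k + 1)

def truncN (m : ℕ) (B : ℕ → Bool) : ℕ → Bool :=
  fun k => if k ≤ m then B k else true

def dblN (m : ℕ) (C : ℕ → Bool) : ℕ → Bool :=
  fun k => if k ≤ m then C k else if k ≤ 2 * m then C (k - m) else true

lemma insN_lt {m f x k} (h : k < m) : insN m f x k = f k := by simp [insN, h]
lemma insN_eq {m f x} : insN m f x m = x := by simp [insN]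
lemma insN_gt {m f x k} (h : m < k) : insN m f x k = f (k - 1) := by
  have h1 : ¬ k < m := by omega
  have h2 : ¬ k = m := by omega
  simp [insN, h1, h2]
lemma delN_lt {m B k} (h : k < m) : delN m B k = B k := by simp [delN, h]
lemma delN_ge {m B k} (h : m ≤ k) : delN m B k = B (k + 1) := by
  simp [delN]; omega
lemma truncN_le {m B k} (h : k ≤ m) : truncN m B k = B k := by simp [truncN, h]
lemma truncN_gt {m B k} (h : m < k) : truncN m B k = true := by simp [truncN]; omega
lemma dblN_le {m C k} (h : k ≤ m) : dblN m C k = C k := by simp [dblN, h]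
lemma dblN_mid {m C k} (h1 : m < k) (h2 : k ≤ 2 * m) : dblN m C k = C (k - m) := by
  have h1' : ¬ k ≤ m := by omega
  simp [dblN, h1', h2]
lemma dblN_gt {m C k} (h : 2 * m < k) : dblN m C k = true := by
  have h1 : ¬ k ≤ m := by omega
  have h2 : ¬ k ≤ 2 * m := by omega
  simp [dblN, h1, h2]

section Core
variable {m : ℕ}

/-- endpoints of the inserted string -/
lemma insN_endpoints (hm : 2 ≤ m) {f : ℕ → Bool} {x : Bool} (hf : GoodN (2 * m) f) :
    insN m f x 0 = true ∧ insN m f x 1 = false ∧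
    insN m f x (2 * m + 1 - 2) = false ∧ insN m f x (2 * m + 1 - 1) = true := by
  obtain ⟨h0, h1, h2, h3, -⟩ := id hf
  refine ⟨?_, ?_, ?_, ?_⟩
  · rw [insN_lt (by omega)]; exact h0
  · rw [insN_lt (by omega)]; exact h1
  · have : 2 * m + 1 - 2 = 2 * m - 1 := by omega
    rw [this, insN_gt (by omega)]
    have : 2 * m - 1 - 1 = 2 * m - 2 := by omega
    rw [this]; exact h2
  · have : 2 * m + 1 - 1 = 2 * m := by omega
    rw [this, insN_gt (by omega)]
    have : 2 * m - 1 = 2 * m - 1 := rfl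
    exact h3

/-- F1 : the inserted string has no shift p ≠ m in [1, 2m-1]. -/
lemma insN_shift_only_m (hm : 2 ≤ m) {f : ℕ → Bool} {x : Bool} (hf : GoodN (2 * m) f)
    {p : ℕ} (hp0 : 0 < p) (hp1 : p < 2 * m) (hpm : p ≠ m) :
    ¬ ShiftN (insN m f x) (2 * m + 1) p := by
  intro hB
  set B := insN m f x with hBdef
  rcases lt_or_gt_of_ne hpm with hlt | hgt
  · -- p < m : f would have shift (t*p - 1) with t*p ∈ [m+1, m+p]
    have hdm := Nat.div_add_mod m p
    have hml := Nat.mod_lt m hp0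
    set t := m / p + 1 with ht
    have hq1 : m + 1 ≤ t * p := by
      have : t * p = p * (m / p) + p := by ring
      omega
    have hq2 : t * p ≤ m + p := by
      have : t * p = p * (m / p) + p := by ring
      omega
    refine hf.2.2.2.2 (t * p - 1) (by omega) (by omega) ?_
    intro j hj
    -- f (t*p - 1 + j) = B (t*p + j) ; B (t*p + j) = B j ; B j = f j
    have e1 : f (t * p - 1 + j) = B (t * p + j) := by
      rw [hBdef, insN_gt (by omega)]
      congr 1; omega
    have e2 : B (t * p + j) = B j := by
      have step : ∀ y, 0 ≤ y → y + p ≤ 2 * m → B (y + p) = B y := by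
        intro y _ hy
        have := hB y (by omega)
        rw [Nat.add_comm p y] at this
        exact this
      have := tower step t j (by omega) (by omega)
      rw [← this]; congr 1; ring
    have e3 : B j = f j := by rw [hBdef, insN_lt (by omega)]
    rw [e1, e2, e3]
  · -- p > m : f has shift p - 1 ∈ [m, 2m-2]
    refine hf.2.2.2.2 (p - 1) (by omega) (by omega) ?_
    intro j hj
    have e1 : f (p - 1 + j) = B (p + j) := by
      rw [hBdef, insN_gt (by omega)]
      congr 1; omega
    have e2 : B (p + j) = B j := hB j (by omega)
    have e3 : B j = f j := by rw [hBdef, insN_lt (by omega)]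
    rw [e1, e2, e3]

/-- F2 : if the inserted string has shift m, its length-(m+1) prefix is good. -/
lemma trunc_good (hm : 2 ≤ m) {f : ℕ → Bool} {x : Bool} (hf : GoodN (2 * m) f)
    (hs : ShiftN (insN m f x) (2 * m + 1) m) :
    GoodN (m + 1) (truncN m (insN m f x)) := by
  set B := insN m f x with hBdef
  obtain ⟨h0, h1, h2, h3, -⟩ := id hf
  have e0 : truncN m B 0 = true := by
    rw [truncN_le (by omega), hBdef, insN_lt (by omega)]; exact h0
  have e1 : truncN m B 1 = false := by
    rw [truncN_le (by omega), hBdef, insN_lt (by omega)]; exact h1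
  have e2 : truncN m B (m + 1 - 2) = false := by
    have hx : m + 1 - 2 = m - 1 := by omega
    rw [hx, truncN_le (by omega)]
    have := hs (m - 1) (by omega)
    rw [← this]
    have hx2 : m + (m - 1) = 2 * m - 1 := by omega
    rw [hx2, hBdef, insN_gt (by omega)]
    have hx3 : 2 * m - 1 - 1 = 2 * m - 2 := by omega
    rw [hx3]; exact h2
  have e3 : truncN m B (m + 1 - 1) = true := by
    have hx : m + 1 - 1 = m := by omega
    rw [hx, truncN_le (by omega)]
    have := hs 0 (by omega)
    simp only [Nat.add_zero] at this
    rw [this, hBdef, insN_lt (by omega)]; exact h0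
  refine ⟨e0, e1, e2, e3, ?_⟩
  intro p hp0 hp1 hC
  have hp1' : p < m := by omega
  -- f has shift m + p - 1
  refine hf.2.2.2.2 (m + p - 1) (by omega) (by omega) ?_
  intro j hj
  have hjm : j ≤ m - p := by omega
  have t1 : f (m + p - 1 + j) = B (m + p + j) := by
    rw [hBdef, insN_gt (by omega)]; congr 1; omega
  have t2 : B (m + p + j) = B (p + j) := by
    have := hs (p + j) (by omega)
    rw [← this]; congr 1; ring
  have t3 : B (p + j) = truncN m B (p + j) := (truncN_le (by omega)).symm
  have t4 : truncN m B (p + j) = truncN m B j := hC j (by omega)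
  have t5 : truncN m B j = B j := truncN_le (by omega)
  have t6 : B j = f j := by rw [hBdef, insN_lt (by omega)]
  rw [t1, t2, t3, t4, t5, t6]

/-- S1 : deleting the middle character of a good string of length 2m+1 gives a
good string of length 2m. -/
lemma delN_good (hm : 2 ≤ m) {B : ℕ → Bool} (hB : GoodN (2 * m + 1) B) :
    GoodN (2 * m) (delN m B) := by
  obtain ⟨h0, h1, h2, h3, hns⟩ := id hB
  have e2' : B (2 * m - 1) = false := by
    have : 2 * m + 1 - 2 = 2 * m - 1 := by omega
    rwa [this] at h2
  have e3' : B (2 * m) = true := by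
    have : 2 * m + 1 - 1 = 2 * m := by omega
    rwa [this] at h3
  refine ⟨?_, ?_, ?_, ?_, ?_⟩
  · rw [delN_lt (by omega)]; exact h0
  · rw [delN_lt (by omega)]; exact h1
  · rw [delN_ge (by omega)]
    have : 2 * m - 2 + 1 = 2 * m - 1 := by omega
    rw [this]; exact e2'
  · rw [delN_ge (by omega)]
    have : 2 * m - 1 + 1 = 2 * m := by omega
    rw [this]; exact e3'
  intro s hs0 hs1 hsf
  rcases le_or_gt m s with hge | hlt
  · -- s ≥ m: B has shift s+1
    refine hns (s + 1) (by omega) (by omega) ?_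
    intro j hj
    have t1 : B (s + 1 + j) = delN m B (s + j) := by
      rw [delN_ge (by omega)]; congr 1; omega
    have t2 : delN m B (s + j) = delN m B j := hsf j (by omega)
    have t3 : delN m B j = B j := delN_lt (by omega)
    rw [t1, t2, t3]
  · -- s < m : build shift t*s+1 of B with t*s ∈ [m, m+s-1]
    have hi : ∀ y, 0 ≤ y → y + s ≤ m - 1 → B (y + s) = B y := by
      intro y _ hy
      have := hsf y (by omega)
      rw [delN_lt (by omega), delN_lt (by omega)] at this
      rw [Nat.add_comm y s]; exact this
    have hii : ∀ y, m - s ≤ y → y ≤ m - 1 → B (y + s + 1) = B y := by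
      intro y hy1 hy2
      have := hsf y (by omega)
      rw [delN_ge (by omega), delN_lt (by omega)] at this
      have e : s + y + 1 = y + s + 1 := by omega
      rw [e] at this; exact this
    have hiii : ∀ y, m + 1 ≤ y → y + s ≤ 2 * m → B (y + s) = B y := by
      intro y hy1 hy2
      have := hsf (y - 1) (by omega)
      rw [delN_ge (by omega), delN_ge (by omega)] at this
      have e1 : s + (y - 1) + 1 = y + s := by omega
      have e2 : y - 1 + 1 = y := by omega
      rw [e1, e2] at this; exact this
    have hdm := Nat.div_add_mod (m - 1) s
    have hml := Nat.mod_lt (m - 1) hs0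
    set t := (m - 1) / s + 1 with htdef
    have hcm : t * s = s * ((m - 1) / s) + s := by ring
    have hts1 : m ≤ t * s := by omega
    have hts2 : t * s ≤ m + s - 1 := by omega
    refine hns (t * s + 1) (by omega) (by omega) ?_
    intro j hj
    have hjb : j ≤ m - 1 := by omega
    have hd1 := Nat.div_add_mod (m - 1 - j) s
    have hm1 := Nat.mod_lt (m - 1 - j) hs0
    set t1 := (m - 1 - j) / s with ht1def
    have hcm1 : t1 * s = s * t1 := Nat.mul_comm _ _
    have ha1 : j + t1 * s ≤ m - 1 := by omega
    have ha2 : m - s ≤ j + t1 * s := by omega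
    have ht1t : t1 < t := by
      by_contra hc
      push_neg at hc
      have : t * s ≤ t1 * s := Nat.mul_le_mul_right s hc
      omega
    have efin : j + t1 * s + s + 1 + (t - t1 - 1) * s = t * s + 1 + j := by
      have h' : t1 + 1 + (t - t1 - 1) = t := by omega
      calc j + t1 * s + s + 1 + (t - t1 - 1) * s
          = j + 1 + (t1 + 1 + (t - t1 - 1)) * s := by ring
        _ = j + 1 + t * s := by rw [h']
        _ = t * s + 1 + j := by ring
    have step1 : B (j + t1 * s) = B j := tower hi t1 j (by omega) ha1
    have step2 : B ((j + t1 * s) + s + 1) = B (j + t1 * s) := hii _ ha2 ha1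
    have step3 : B ((j + t1 * s + s + 1) + (t - t1 - 1) * s) = B (j + t1 * s + s + 1) := by
      have hb : (j + t1 * s + s + 1) + (t - t1 - 1) * s ≤ 2 * m := by omega
      exact tower hiii (t - t1 - 1) _ (by omega) hb
    rw [show j + t1 * s + s + 1 + (t - t1 - 1) * s = t * s + 1 + j from efin] at step3
    rw [step3, step2, step1]

/-- S2 : deleting the middle of the period-m doubling of a good string of length
m+1 gives a good string of length 2m. -/
lemma deldbl_good (hm : 2 ≤ m) {C : ℕ → Bool} (hC : GoodN (m + 1) C) :
    GoodN (2 * m) (delN m (dblN m C)) := by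
  obtain ⟨h0, h1, h2, h3, hns⟩ := id hC
  have h2' : C (m - 1) = false := by
    have : m + 1 - 2 = m - 1 := by omega
    rwa [this] at h2
  have h3' : C m = true := by
    have : m + 1 - 1 = m := by omega
    rwa [this] at h3
  set f := delN m (dblN m C) with hfdef
  have flo : ∀ k, k < m → f k = C k := by
    intro k hk
    rw [hfdef, delN_lt hk, dblN_le (by omega)]
  have fhi : ∀ k, m ≤ k → k ≤ 2 * m - 1 → f k = C (k + 1 - m) := by
    intro k hk1 hk2
    rw [hfdef, delN_ge hk1, dblN_mid (by omega) (by omega)]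
  refine ⟨?_, ?_, ?_, ?_, ?_⟩
  · rw [flo 0 (by omega)]; exact h0
  · rw [flo 1 (by omega)]; exact h1
  · rw [fhi (2 * m - 2) (by omega) (by omega)]
    have : 2 * m - 2 + 1 - m = m - 1 := by omega
    rw [this]; exact h2'
  · rw [fhi (2 * m - 1) (by omega) (by omega)]
    have : 2 * m - 1 + 1 - m = m := by omega
    rw [this]; exact h3'
  intro s hs0 hs1 hsf
  rcases le_or_gt m s with hge | hlt
  · -- s ≥ m : C has shift s + 1 - m ∈ [1, m-1]
    refine hns (s + 1 - m) (by omega) (by omega) ?_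
    intro j hj
    have t1 : C (s + 1 - m + j) = f (s + j) := by
      rw [fhi (s + j) (by omega) (by omega)]
      congr 1; omega
    have t2 : f (s + j) = f j := hsf j (by omega)
    have t3 : f j = C j := flo j (by omega)
    rw [t1, t2, t3]
  · -- s < m : C has shift s
    refine hns s (by omega) (by omega) ?_
    intro i hi
    rcases Nat.eq_zero_or_pos i with rfl | hipos
    · -- i = 0 : from hsf at j = 0
      have := hsf 0 (by omega)
      simp only [Nat.add_zero] at this ⊢
      rw [flo s (by omega), flo 0 (by omega)] at this
      exact this
    · -- i ≥ 1 : from hsf at j = m + i - 1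
      have := hsf (m + i - 1) (by omega)
      have e1 : s + (m + i - 1) = (m + (s + i)) - 1 := by omega
      have t1 : f (s + (m + i - 1)) = C (s + i) := by
        rw [e1, fhi _ (by omega) (by omega)]
        congr 1; omega
      have t2 : f (m + i - 1) = C i := by
        rw [fhi _ (by omega) (by omega)]
        congr 1; omega
      rw [t1, t2] at this
      exact this

/-- deleting after inserting recovers the original -/
lemma del_ins {f : ℕ → Bool} {x : Bool} : delN m (insN m f x) = f := by
  funext k
  rcases lt_or_ge k m with h | h
  · rw [delN_lt h, insN_lt h]
  · rw [delN_ge h, insN_gt (by omega)]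
    congr 1

/-- inserting the deleted character recovers the original -/
lemma ins_del {B : ℕ → Bool} : insN m (delN m B) (B m) = B := by
  funext k
  rcases lt_trichotomy k m with h | h | h
  · rw [insN_lt h, delN_lt h]
  · rw [h, insN_eq]
  · rw [insN_gt h, delN_ge (by omega)]
    congr 1; omega

/-- a string of length 2m+1 with shift m is the doubling of its truncation -/
lemma dbl_trunc {B : ℕ → Bool} (hs : ShiftN B (2 * m + 1) m)
    (ht : TailT (2 * m + 1) B) : dblN m (truncN m B) = B := by
  funext k
  rcases le_or_gt k m with h | h
  · rw [dblN_le h, truncN_le h]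
  rcases le_or_gt k (2 * m) with h2 | h2
  · rw [dblN_mid h h2, truncN_le (by omega)]
    have := hs (k - m) (by omega)
    have e : m + (k - m) = k := by omega
    rw [e] at this
    exact this.symm
  · rw [dblN_gt h2, ht k (by omega)]

/-- truncating the doubling recovers the original -/
lemma trunc_dbl {C : ℕ → Bool} (ht : TailT (m + 1) C) :
    truncN m (dblN m C) = C := by
  funext k
  rcases le_or_gt k m with h | h
  · rw [truncN_le h, dblN_le h]
  · rw [truncN_gt h, ht k (by omega)]

/-- the doubling has shift m -/
lemma dbl_shift_m (hm : 1 ≤ m) {C : ℕ → Bool} (h0 : C 0 = true) (hmm : C m = true) :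
    ShiftN (dblN m C) (2 * m + 1) m := by
  intro j hj
  rcases Nat.eq_zero_or_pos j with rfl | hjpos
  · rw [Nat.add_zero, dblN_le (le_refl m), dblN_le (by omega), hmm, h0]
  · rw [dblN_mid (by omega) (by omega), dblN_le (by omega)]
    congr 1; omega

lemma insN_tail {f : ℕ → Bool} {x : Bool} (ht : TailT (2 * m) f) :
    TailT (2 * m + 1) (insN m f x) := by
  intro k hk
  rw [insN_gt (by omega), ht _ (by omega)]

lemma delN_tail {B : ℕ → Bool} (ht : TailT (2 * m + 1) B) :
    TailT (2 * m) (delN m B) := by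
  intro k hk
  rw [delN_ge (by omega), ht _ (by omega)]

lemma truncN_tail {B : ℕ → Bool} : TailT (m + 1) (truncN m B) := by
  intro k hk
  rw [truncN_gt (by omega)]

lemma dblN_tail {C : ℕ → Bool} : TailT (2 * m + 1) (dblN m C) := by
  intro k hk
  rw [dblN_gt (by omega)]

lemma deldbl_tail {C : ℕ → Bool} : TailT (2 * m) (delN m (dblN m C)) :=
  delN_tail dblN_tail

/-- ins of deldbl is dbl -/
lemma ins_deldbl {C : ℕ → Bool} : insN m (delN m (dblN m C)) (C m) = dblN m C := by
  have : C m = dblN m C m := (dblN_le (le_refl m)).symm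
  rw [this, ins_del]

/-- if the insertion is not good then it has shift m -/
lemma insN_not_good (hm : 2 ≤ m) {f : ℕ → Bool} {x : Bool} (hf : GoodN (2 * m) f)
    (hng : ¬ GoodN (2 * m + 1) (insN m f x)) :
    ShiftN (insN m f x) (2 * m + 1) m := by
  obtain ⟨e0, e1, e2, e3⟩ := insN_endpoints hm (x := x) hf
  by_contra hns
  apply hng
  refine ⟨e0, e1, e2, e3, ?_⟩
  intro p hp0 hp1 hsp
  rcases eq_or_ne p m with rfl | hpm
  · exact hns hsp
  · exact insN_shift_only_m hm hf hp0 (by omega) hpm hsp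

open Classical in
/-- forward map : (good string of length 2m, inserted bit) to good string of
length 2m+1 or good string of length m+1 -/
noncomputable def Phi (hm : 2 ≤ m) : F (2 * m) × Bool → F (2 * m + 1) ⊕ F (m + 1) :=
  fun fx =>
    if h : GoodN (2 * m + 1) (insN m fx.1.1 fx.2) then
      Sum.inl ⟨insN m fx.1.1 fx.2, h, insN_tail fx.1.2.2⟩
    else
      Sum.inr ⟨truncN m (insN m fx.1.1 fx.2),
        trunc_good hm fx.1.2.1 (insN_not_good hm fx.1.2.1 h), truncN_tail⟩

/-- backward map -/
def Psi (hm : 2 ≤ m) : F (2 * m + 1) ⊕ F (m + 1) → F (2 * m) × Bool :=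
  fun y => match y with
  | Sum.inl B => (⟨delN m B.1, delN_good hm B.2.1, delN_tail B.2.2⟩, B.1 m)
  | Sum.inr C => (⟨delN m (dblN m C.1), deldbl_good hm C.2.1, deldbl_tail⟩, C.1 m)

lemma left_inv (hm : 2 ≤ m) : Function.LeftInverse (Psi hm) (Phi hm) := by
  rintro ⟨⟨f, hf, htf⟩, x⟩
  unfold Phi
  split
  · next h =>
    unfold Psi
    refine Prod.ext ?_ ?_
    · exact Subtype.ext del_ins
    · exact insN_eq
  · next h =>
    have hs := insN_not_good hm hf h
    unfold Psi
    have hd : dblN m (truncN m (insN m f x)) = insN m f x :=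
      dbl_trunc hs (insN_tail htf)
    refine Prod.ext ?_ ?_
    · refine Subtype.ext ?_
      show delN m (dblN m (truncN m (insN m f x))) = f
      rw [hd, del_ins]
    · show truncN m (insN m f x) m = x
      rw [truncN_le (le_refl m), insN_eq]

lemma right_inv (hm : 2 ≤ m) : Function.RightInverse (Psi hm) (Phi hm) := by
  rintro (⟨B, hB, htB⟩ | ⟨C, hC, htC⟩)
  · unfold Psi
    unfold Phi
    have e : insN m (delN m B) (B m) = B := ins_del
    rw [dif_pos (by rw [e]; exact hB)]
    simp only [Sum.inl.injEq]
    exact congrArg Sum.inl (Subtype.ext e)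
  · unfold Psi
    unfold Phi
    have e : insN m (delN m (dblN m C)) (C m) = dblN m C := ins_deldbl
    have hCm : C m = true := by
      have := hC.2.2.2.1
      have e2 : m + 1 - 1 = m := by omega
      rwa [e2] at this
    have hng : ¬ GoodN (2 * m + 1) (dblN m C) := by
      intro hg
      exact hg.2.2.2.2 m (by omega) (by omega) (dbl_shift_m (by omega) hC.1 hCm)
    rw [dif_neg (by rw [e]; exact hng)]
    simp only [Sum.inr.injEq]
    refine congrArg Sum.inr (Subtype.ext ?_)
    show truncN m (insN m (delN m (dblN m C)) (C m)) = C
    rw [e, trunc_dbl htC]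

/-- the key equivalence -/
noncomputable def keyEquiv (hm : 2 ≤ m) : (F (2 * m) × Bool) ≃ (F (2 * m + 1) ⊕ F (m + 1)) where
  toFun := Phi hm
  invFun := Psi hm
  left_inv := left_inv hm
  right_inv := right_inv hm

/-! ### Relating `cstar` to `Nat.card (F n)` -/

def extN {n : ℕ} (A : Fin n → Bool) : ℕ → Bool :=
  fun k => if h : k < n then A ⟨k, h⟩ else true

lemma extN_lt {n : ℕ} {A : Fin n → Bool} {k : ℕ} (h : k < n) :
    extN A k = A ⟨k, h⟩ := by simp [extN, h]

lemma extN_ge {n : ℕ} {A : Fin n → Bool} {k : ℕ} (h : n ≤ k) :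
    extN A k = true := by
  have : ¬ k < n := by omega
  simp [extN, this]

lemma extN_tail {n : ℕ} (A : Fin n → Bool) : TailT n (extN A) :=
  fun _ hk => extN_ge hk

/-- the correlation indicator in terms of `ShiftN` -/
lemma D_iff {n : ℕ} (A : Fin n → Bool) (i : Fin n) :
    (∀ j : Fin n, (i : ℕ) + (j : ℕ) < n → A (i + j) = A j) ↔
      ShiftN (extN A) n (i : ℕ) := by
  constructor
  · intro h j hj
    have hjn : j < n := by omega
    have hadd : (i + (⟨j, hjn⟩ : Fin n)) = ⟨(i : ℕ) + j, hj⟩ := by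
      apply Fin.ext
      rw [Fin.val_add]
      exact Nat.mod_eq_of_lt hj
    have := h ⟨j, hjn⟩ hj
    rw [hadd] at this
    rw [extN_lt hj, extN_lt hjn]
    exact this
  · intro h j hj
    have := h (j : ℕ) hj
    rw [extN_lt hj, extN_lt j.isLt] at this
    have hadd : (i + j) = (⟨(i : ℕ) + (j : ℕ), hj⟩ : Fin n) := by
      apply Fin.ext
      rw [Fin.val_add]
      exact Nat.mod_eq_of_lt hj
    rw [hadd]
    convert this using 2

/-- translation of the endpoint conditions -/
lemma endpoint_iff {n : ℕ} (A : Fin n → Bool) (d : ℕ) (hd : d < n) (b : Bool) :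
    (∀ i : Fin n, (i : ℕ) = d → A i = b) ↔ extN A d = b := by
  constructor
  · intro h
    rw [extN_lt hd]
    exact h ⟨d, hd⟩ rfl
  · intro h i hi
    have : i = ⟨d, hd⟩ := Fin.ext hi
    rw [extN_lt hd] at h
    rw [this]
    exact h

/-- the autocorrelation condition in terms of shifts -/
lemma conway_iff {n : ℕ} (hn : 3 ≤ n) (A : Fin n → Bool)
    (h0 : extN A 0 = true) (hl : extN A (n - 1) = true) :
    conway A A = 2 ^ (n - 1) + 1 ↔
      ∀ p, 0 < p → p < n - 1 → ¬ ShiftN (extN A) n p := by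
  classical
  set g : Fin n → ℕ := fun i =>
    if (∀ j : Fin n, (i : ℕ) + (j : ℕ) < n → A (i + j) = A j) then 2 ^ (n - 1 - (i : ℕ)) else 0
    with hgdef
  have hc : conway A A = ∑ i : Fin n, g i := rfl
  set z : Fin n := ⟨0, by omega⟩ with hz
  set l : Fin n := ⟨n - 1, by omega⟩ with hldef
  have hzl : l ≠ z := by
    intro h
    have := congrArg Fin.val h
    simp [hz, hldef] at this
    omega
  have hsplit1 : ∑ i : Fin n, g i = g z + ∑ i ∈ Finset.univ.erase z, g i :=
    (Finset.add_sum_erase _ g (Finset.mem_univ z)).symm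
  have hmem : l ∈ Finset.univ.erase z := Finset.mem_erase.mpr ⟨hzl, Finset.mem_univ l⟩
  have hsplit2 : ∑ i ∈ Finset.univ.erase z, g i
      = g l + ∑ i ∈ (Finset.univ.erase z).erase l, g i :=
    (Finset.add_sum_erase _ g hmem).symm
  have hDz : ∀ j : Fin n, ((z : ℕ)) + (j : ℕ) < n → A (z + j) = A j := by
    intro j hj
    congr 1
    apply Fin.ext
    rw [Fin.val_add]
    simp [hz]
    exact Nat.mod_eq_of_lt j.isLt
  have hgz : g z = 2 ^ (n - 1) := by
    rw [hgdef]
    simp only [if_pos hDz]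
    simp [hz]
  have hDl : ∀ j : Fin n, ((l : ℕ)) + (j : ℕ) < n → A (l + j) = A j := by
    intro j hj
    have hjv : (j : ℕ) = 0 := by
      have := j.isLt
      simp [hldef] at hj
      omega
    have hj0 : j = z := Fin.ext (by simp [hz, hjv])
    subst hj0
    have hlz : l + z = l := by
      apply Fin.ext
      rw [Fin.val_add]
      show ((n - 1) + 0) % n = n - 1
      rw [Nat.add_zero]
      exact Nat.mod_eq_of_lt (by omega)
    rw [hlz]
    rw [extN_lt (show (n-1) < n by omega)] at hl
    rw [extN_lt (show 0 < n by omega)] at h0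
    show A l = A z
    rw [show l = ⟨n-1, by omega⟩ from rfl, show z = ⟨0, by omega⟩ from rfl, hl, h0]
  have hgl : g l = 1 := by
    rw [hgdef]
    simp only [if_pos hDl]
    simp [hldef]
  rw [hc, hsplit1, hsplit2, hgz, hgl]
  have hiff1 : 2 ^ (n - 1) + (1 + ∑ i ∈ (Finset.univ.erase z).erase l, g i)
      = 2 ^ (n - 1) + 1 ↔ ∑ i ∈ (Finset.univ.erase z).erase l, g i = 0 := by omega
  rw [hiff1, Finset.sum_eq_zero_iff]
  constructor
  · intro h p hp0 hp1 hsp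
    have hpn : p < n := by omega
    set i : Fin n := ⟨p, hpn⟩ with hidef
    have hiz : i ≠ z := by
      intro hcon
      have := congrArg Fin.val hcon
      simp [hidef, hz] at this
      omega
    have hil : i ≠ l := by
      intro hcon
      have := congrArg Fin.val hcon
      simp [hidef, hldef] at this
      omega
    have hin : i ∈ (Finset.univ.erase z).erase l :=
      Finset.mem_erase.mpr ⟨hil, Finset.mem_erase.mpr ⟨hiz, Finset.mem_univ i⟩⟩
    have := h i hin
    rw [hgdef] at this
    simp only at this
    rw [if_pos ((D_iff A i).mpr (by simpa [hidef] using hsp))] at this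
    exact absurd this (by positivity)
  · intro h i hin
    have h1 := Finset.mem_erase.mp hin
    have hil := h1.1
    have hiz := (Finset.mem_erase.mp h1.2).1
    have hiv0 : (i : ℕ) ≠ 0 := fun hcon => hiz (Fin.ext (by simp [hz, hcon]))
    have hivl : (i : ℕ) ≠ n - 1 := fun hcon => hil (Fin.ext (by simp [hldef, hcon]))
    rw [hgdef]
    simp only
    rw [if_neg]
    intro hD
    exact h (i : ℕ) (by omega) (by omega) ((D_iff A i).mp hD)

/-- the full predicate of `cstar` in terms of `GoodN` -/
lemma pred_iff {n : ℕ} (hn : 3 ≤ n) (A : Fin n → Bool) :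
    ((∀ i : Fin n, (i : ℕ) = 0 → A i = true) ∧
     (∀ i : Fin n, (i : ℕ) = 1 → A i = false) ∧
     (∀ i : Fin n, (i : ℕ) = n - 2 → A i = false) ∧
     (∀ i : Fin n, (i : ℕ) = n - 1 → A i = true) ∧
     conway A A = 2 ^ (n - 1) + 1) ↔ GoodN n (extN A) := by
  rw [endpoint_iff A 0 (by omega), endpoint_iff A 1 (by omega),
    endpoint_iff A (n - 2) (by omega), endpoint_iff A (n - 1) (by omega)]
  unfold GoodN
  constructor
  · rintro ⟨h0, h1, h2, h3, hc⟩
    exact ⟨h0, h1, h2, h3, (conway_iff hn A h0 h3).mp hc⟩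
  · rintro ⟨h0, h1, h2, h3, hs⟩
    exact ⟨h0, h1, h2, h3, (conway_iff hn A h0 h3).mpr hs⟩

/-- restriction of a normalized string to `Fin n` -/
lemma extN_restr {n : ℕ} {f : ℕ → Bool} (ht : TailT n f) :
    extN (fun i : Fin n => f (i : ℕ)) = f := by
  funext k
  rcases lt_or_ge k n with h | h
  · rw [extN_lt h]
  · rw [extN_ge h, ht k h]

noncomputable def E1 (n : ℕ) (hn : 3 ≤ n) :
    {A : Fin n → Bool //
      (∀ i : Fin n, (i : ℕ) = 0 → A i = true) ∧
      (∀ i : Fin n, (i : ℕ) = 1 → A i = false) ∧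
      (∀ i : Fin n, (i : ℕ) = n - 2 → A i = false) ∧
      (∀ i : Fin n, (i : ℕ) = n - 1 → A i = true) ∧
      conway A A = 2 ^ (n - 1) + 1} ≃ F n where
  toFun := fun A => ⟨extN A.1, (pred_iff hn A.1).mp A.2, extN_tail A.1⟩
  invFun := fun f => ⟨fun i => f.1 (i : ℕ), by
    have h := (pred_iff hn (fun i : Fin n => f.1 (i : ℕ)))
    rw [extN_restr f.2.2] at h
    exact h.mpr f.2.1⟩
  left_inv := by
    rintro ⟨A, hA⟩
    apply Subtype.ext
    funext i
    exact extN_lt i.isLt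
  right_inv := by
    rintro ⟨f, hf⟩
    exact Subtype.ext (extN_restr hf.2)

lemma cstar_card {n : ℕ} (hn : 3 ≤ n) : cstar n = Nat.card (F n) := by
  rw [cstar, ← Nat.card_eq_fintype_card]
  exact Nat.card_congr (E1 n hn)

instance finiteF (n : ℕ) [NeZero n] : Finite (F n) := by
  have hn : 1 ≤ n := Nat.one_le_iff_ne_zero.mpr (NeZero.ne n)
  apply Finite.of_injective (fun f : F n => (fun i : Fin n => f.1 (i : ℕ)))
  rintro ⟨f, hf⟩ ⟨g, hg⟩ h
  apply Subtype.ext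
  funext k
  show f k = g k
  rcases lt_or_ge k n with hk | hk
  · exact congrFun h ⟨k, hk⟩
  · rw [hf.2 k hk, hg.2 k hk]

lemma key_count (m : ℕ) (hm : 2 ≤ m) :
    2 * cstar (2 * m) = cstar (2 * m + 1) + cstar (m + 1) := by
  haveI : NeZero (2 * m) := ⟨by omega⟩
  haveI : NeZero (2 * m + 1) := ⟨by omega⟩
  haveI : NeZero (m + 1) := ⟨by omega⟩
  have e := Nat.card_congr (keyEquiv hm)
  rw [Nat.card_prod, Nat.card_sum] at e
  have hb : Nat.card Bool = 2 := by simp [Nat.card_eq_fintype_card]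
  rw [hb] at e
  rw [cstar_card (show 3 ≤ 2 * m by omega), cstar_card (show 3 ≤ 2 * m + 1 by omega),
    cstar_card (show 3 ≤ m + 1 by omega)]
  omega

end Core
end Csirik

/-- For every integer `m ≥ 2`, `c*_{2m+1} = 2 c*_{2m} - c*_{m+1}`. -/
theorem cstar_recurrence_odd (m : ℕ) (hm : 2 ≤ m) :
    (cstar (2 * m + 1) : ℤ) = 2 * (cstar (2 * m) : ℤ) - (cstar (m + 1) : ℤ) := by
  have h := Csirik.key_count m hm
  omega
end

section
/- Let m and k be positive integers with 0 ≤ k ≤ 2^m − 1, and let X and Y be head/tail strings each of length less than m. The number of ordered pairs (A_1, A_2) of head/tail strings of length m such that X is a prefix of A_1, Y is a suffix of A_2, and C(A_2, A_1) = k, is equal to the number of head/tail strings A of length 2m such that X is a prefix of A, Y is a suffix of A, and the autocorrelation C(A,A) is congruent to k modulo 2^m. -/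
set_option maxHeartbeats 1000000

lemma sum_two_pow (n : ℕ) : ∑ i ∈ Finset.range n, 2 ^ i = 2 ^ n - 1 := by
  induction n with
  | zero => simp
  | succ n ih =>
    rw [Finset.sum_range_succ, ih]
    have := Nat.one_le_two_pow (n := n)
    have := Nat.one_le_two_pow (n := n + 1)
    rw [pow_succ]
    omega

lemma conway_lt {n : ℕ} (A B : Fin n → Bool) : conway A B < 2 ^ n := by
  have h1 : conway A B ≤ ∑ i : Fin n, 2 ^ (n - 1 - (i : ℕ)) := by
    apply Finset.sum_le_sum
    intro i _
    split <;> simp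
  have h2 : ∑ i : Fin n, 2 ^ (n - 1 - (i : ℕ)) = 2 ^ n - 1 := by
    rw [Fin.sum_univ_eq_sum_range (fun i => 2 ^ (n - 1 - i))]
    rw [← Finset.sum_range_reflect]
    have h3 : ∀ j ∈ Finset.range n, 2 ^ (n - 1 - (n - 1 - j)) = 2 ^ j := by
      intro j hj
      simp only [Finset.mem_range] at hj
      congr 1
      omega
    rw [Finset.sum_congr rfl h3]
    exact sum_two_pow n
  have h4 : (0:ℕ) < 2 ^ n := Nat.two_pow_pos n
  omega

def glue (m : ℕ) (P : (Fin m → Bool) × (Fin m → Bool)) : Fin (2 * m) → Bool :=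
  fun i => if h : (i : ℕ) < m then P.1 ⟨i, h⟩ else P.2 ⟨(i : ℕ) - m, by omega⟩

lemma glue_lt (m : ℕ) (P : (Fin m → Bool) × (Fin m → Bool)) (i : Fin (2 * m)) (h : (i:ℕ) < m) :
    glue m P i = P.1 ⟨i, h⟩ := dif_pos h

lemma glue_ge (m : ℕ) (P : (Fin m → Bool) × (Fin m → Bool)) (i : Fin (2 * m)) (h : ¬ (i:ℕ) < m) :
    glue m P i = P.2 ⟨(i:ℕ) - m, by omega⟩ := dif_neg h

lemma fin_add_val {n : ℕ} (a b : Fin n) (h : (a:ℕ) + (b:ℕ) < n) :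
    a + b = ⟨(a:ℕ) + (b:ℕ), h⟩ := by
  apply Fin.ext
  show ((a:ℕ) + (b:ℕ)) % n = (a:ℕ) + (b:ℕ)
  exact Nat.mod_eq_of_lt h

lemma conway_glue_modeq (m : ℕ) (P : (Fin m → Bool) × (Fin m → Bool)) :
    conway (glue m P) (glue m P) ≡ conway P.2 P.1 [MOD 2 ^ m] := by
  set f : Fin (2*m) → ℕ := fun i =>
    if (∀ j : Fin (2*m), (i : ℕ) + (j : ℕ) < 2*m → glue m P (i + j) = glue m P j)
    then 2 ^ (2*m - 1 - (i : ℕ)) else 0 with hf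
  have hmm : m + m = 2 * m := by ring
  have h1 : conway (glue m P) (glue m P) = (∑ i : Fin m, f (Fin.cast hmm (Fin.castAdd m i)))
      + (∑ i : Fin m, f (Fin.cast hmm (Fin.natAdd m i))) := by
    rw [show conway (glue m P) (glue m P) = ∑ i : Fin (2*m), f i from rfl]
    rw [← Fintype.sum_equiv (finCongr hmm) (fun i => f (Fin.cast hmm i)) f (fun i => rfl)]
    exact Fin.sum_univ_add _
  have h2 : (∑ i : Fin m, f (Fin.cast hmm (Fin.castAdd m i))) ≡ 0 [MOD 2 ^ m] := by
    rw [Nat.modEq_zero_iff_dvd]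
    apply Finset.dvd_sum
    intro i _
    simp only [hf]
    split
    · apply pow_dvd_pow
      have h := i.isLt
      have : ((Fin.cast hmm (Fin.castAdd m i)) : ℕ) = (i:ℕ) := rfl
      omega
    · exact dvd_zero _
  have h3 : (∑ i : Fin m, f (Fin.cast hmm (Fin.natAdd m i))) = conway P.2 P.1 := by
    apply Fintype.sum_congr
    intro s
    simp only [hf, conway]
    have hval : ((Fin.cast hmm (Fin.natAdd m s)) : ℕ) = m + s := rfl
    rw [hval]
    have hs := s.isLt
    have hcond : (∀ j : Fin (2*m), m + (s:ℕ) + (j : ℕ) < 2*m →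
          glue m P (Fin.cast hmm (Fin.natAdd m s) + j) = glue m P j)
        ↔ (∀ j : Fin m, (s : ℕ) + (j : ℕ) < m → P.2 (s + j) = P.1 j) := by
      constructor
      · intro hco j hj
        have hjlt : (j:ℕ) < 2*m := by omega
        have hco' := hco ⟨j, hjlt⟩ (by simpa using (by omega : m + (s:ℕ) + (j:ℕ) < 2*m))
        have e1 : Fin.cast hmm (Fin.natAdd m s) + (⟨j, hjlt⟩ : Fin (2*m))
            = ⟨m + s + j, by omega⟩ := by
          have := fin_add_val (Fin.cast hmm (Fin.natAdd m s)) (⟨j, hjlt⟩ : Fin (2*m))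
            (by simp [hval]; omega)
          rw [this]
          apply Fin.ext
          simp [hval]
          omega
        rw [e1, glue_ge m P _ (by simp; omega),
          glue_lt m P _ (by simpa using (by omega : (j:ℕ) < m))] at hco'
        have e2 : P.2 ⟨m + (s:ℕ) + (j:ℕ) - m, by omega⟩ = P.2 (s + j) := by
          rw [fin_add_val s j (by omega)]
          exact congrArg P.2 (Fin.ext (by show m + (s:ℕ) + (j:ℕ) - m = (s:ℕ)+(j:ℕ); omega))
        have e3 : P.1 ⟨(j:ℕ), by omega⟩ = P.1 j := congrArg P.1 (Fin.eta j (by omega))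
        rw [e2, e3] at hco'
        exact hco'
      · intro hco j hj
        have hjm : (j:ℕ) < m := by omega
        have hco' := hco ⟨j, hjm⟩ (by simpa using (by omega : (s:ℕ) + (j:ℕ) < m))
        have e1 : Fin.cast hmm (Fin.natAdd m s) + j = ⟨m + s + j, by omega⟩ := by
          have := fin_add_val (Fin.cast hmm (Fin.natAdd m s)) j (by rw [hval]; omega)
          rw [this]
          apply Fin.ext
          simp [hval]
          omega
        rw [e1, glue_ge m P _ (by simp; omega), glue_lt m P j hjm]
        have e2 : P.2 ⟨m + (s:ℕ) + (j:ℕ) - m, by omega⟩ = P.2 (s + ⟨j, hjm⟩) := by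
          rw [fin_add_val s ⟨j, hjm⟩ (by simpa using (by omega : (s:ℕ) + (j:ℕ) < m))]
          exact congrArg P.2 (Fin.ext (by show m + (s:ℕ) + (j:ℕ) - m = (s:ℕ)+(j:ℕ); omega))
        rw [e2]
        exact hco'
    rw [if_congr hcond rfl rfl]
    have he : 2*m - 1 - (m + (s:ℕ)) = m - 1 - (s:ℕ) := by omega
    rw [he]
  rw [h1, h3]
  calc (∑ i : Fin m, f (Fin.cast hmm (Fin.castAdd m i))) + conway P.2 P.1
      ≡ 0 + conway P.2 P.1 [MOD 2^m] := Nat.ModEq.add_right _ h2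
    _ = conway P.2 P.1 := by ring


def glueEquiv (m : ℕ) : ((Fin m → Bool) × (Fin m → Bool)) ≃ (Fin (2 * m) → Bool) where
  toFun := glue m
  invFun A := (fun i => A ⟨i, by omega⟩, fun i => A ⟨m + i, by omega⟩)
  left_inv P := by
    refine Prod.ext (funext fun i => ?_) (funext fun i => ?_) <;> simp only [glue]
    · rw [dif_pos i.isLt]
    · rw [dif_neg (by omega)]
      exact congrArg P.2 (Fin.ext (by show m + (i:ℕ) - m = (i:ℕ); omega))
  right_inv A := by
    funext i
    simp only [glue]
    split
    · rfl
    · exact congrArg A (Fin.ext (by show m + ((i:ℕ) - m) = (i:ℕ); omega))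

/-- Refined version with a prescribed prefix `X` and suffix `Y`: the number of ordered
pairs `(A₁, A₂)` of strings of length `m` such that `X` is a prefix of `A₁`, `Y` is a
suffix of `A₂`, and `C(A₂, A₁) = k`, equals the number of strings `A` of length `2m`
with prefix `X`, suffix `Y`, and autocorrelation congruent to `k` modulo `2^m`. -/
theorem card_pairs_eq_card_autocorr_prefix_suffix (m p q k : ℕ) (hm : 0 < m)
    (hp : p < m) (hq : q < m) (X : Fin p → Bool) (Y : Fin q → Bool)
    (hk : 0 < k) (hk2 : k ≤ 2 ^ m - 1) :
    Fintype.card {P : (Fin m → Bool) × (Fin m → Bool) //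
        (∀ i : Fin p, P.1 ⟨i, lt_trans i.isLt hp⟩ = X i) ∧
        (∀ i : Fin q, P.2 ⟨m - q + i, by have := i.isLt; omega⟩ = Y i) ∧
        conway P.2 P.1 = k} =
      Fintype.card {A : Fin (2 * m) → Bool //
        (∀ i : Fin p, A ⟨i, by have := i.isLt; omega⟩ = X i) ∧
        (∀ i : Fin q, A ⟨2 * m - q + i, by have := i.isLt; omega⟩ = Y i) ∧
        conway A A ≡ k [MOD 2 ^ m]} := by
  apply Fintype.card_congr
  apply Equiv.subtypeEquiv (glueEquiv m)
  intro P
  have hpre : ∀ i : Fin p, (glueEquiv m P) ⟨i, by have := i.isLt; omega⟩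
      = P.1 ⟨i, lt_trans i.isLt hp⟩ := by
    intro i
    exact glue_lt m P _ (by show (i:ℕ) < m; have := i.isLt; omega)
  have hsuf : ∀ i : Fin q, (glueEquiv m P) ⟨2 * m - q + i, by have := i.isLt; omega⟩
      = P.2 ⟨m - q + i, by have := i.isLt; omega⟩ := by
    intro i
    rw [show (glueEquiv m P) ⟨2 * m - q + i, by have := i.isLt; omega⟩
        = glue m P ⟨2 * m - q + i, by have := i.isLt; omega⟩ from rfl]
    rw [glue_ge m P _ (by have := i.isLt; simp; omega)]
    exact congrArg P.2 (Fin.ext (by show 2*m - q + (i:ℕ) - m = m - q + (i:ℕ); have := i.isLt; omega))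
  constructor
  · rintro ⟨h1, h2, h3⟩
    refine ⟨fun i => by rw [hpre i, h1 i], fun i => by rw [hsuf i, h2 i], ?_⟩
    calc conway (glueEquiv m P) (glueEquiv m P) ≡ conway P.2 P.1 [MOD 2^m] :=
          conway_glue_modeq m P
      _ ≡ k [MOD 2^m] := by rw [h3]
  · rintro ⟨h1, h2, h3⟩
    refine ⟨fun i => by rw [← h1 i, hpre i], fun i => by rw [← h2 i, hsuf i], ?_⟩
    have hmod : conway P.2 P.1 ≡ k [MOD 2^m] := (conway_glue_modeq m P).symm.trans h3
    have hlt : conway P.2 P.1 < 2 ^ m := conway_lt _ _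
    have hklt : k < 2 ^ m := by
      have := Nat.two_pow_pos m
      omega
    unfold Nat.ModEq at hmod
    rwa [Nat.mod_eq_of_lt hlt, Nat.mod_eq_of_lt hklt] at hmod
end
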